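/- Let L ≥ 2 be an integer, A ∈ ℝ^{M×N}, y ∈ ℝ^M, and let x : [0,∞) → ℝ^N be differentiable, satisfy the reduced gradient flow x'(t) = −[Aᵀ(A x(t)^{⊙L} − y)] ⊙ x(t)^{⊙(L−1)} for all t ≥ 0, and have x(t) entrywise strictly positive. Write x̃(t) := x(t)^{⊙L}. Then for every z ∈ ℝ^N with z ≥ 0 and every t ≥ 0, the function t ↦ D_F(z, x̃(t)) is differentiable with d/dt D_F(z, x̃(t)) = −⟨A x̃(t) − y, A x̃(t) − A z⟩, where F and D_F are as defined below. -/

import Mathlib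

open Filter Topology Matrix

noncomputable section

/-- The reduced gradient flow `x'(t) = −[Aᵀ(A x(t)^{⊙L} − y)] ⊙ x(t)^{⊙(L−1)}` for `t ≥ 0`. -/
def GradFlow {M N : ℕ} (A : Matrix (Fin M) (Fin N) ℝ) (y : Fin M → ℝ) (L : ℕ)
    (x : ℝ → Fin N → ℝ) : Prop :=
  ∀ t : ℝ, 0 ≤ t → ∀ i : Fin N,
    HasDerivAt (fun s => x s i)
      (-(Matrix.mulVec Aᵀ (A.mulVec (fun j => x t j ^ L) - y) i * x t i ^ (L - 1))) t

/-- The Bregman potential `F`: for `L = 2`, `F(x) = ½ Σₙ (xₙ log xₙ − xₙ)` (with `0·log 0 = 0`,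
which holds automatically since `Real.log 0 = 0`); for `L > 2`,
`F(x) = (L/(2(2−L))) Σₙ xₙ^{2/L}`. -/
def bregF {N : ℕ} (L : ℕ) (x : Fin N → ℝ) : ℝ :=
  if L = 2 then (1 / 2) * ∑ n, (x n * Real.log (x n) - x n)
  else ((L : ℝ) / (2 * (2 - (L : ℝ)))) * ∑ n, x n ^ ((2 : ℝ) / (L : ℝ))

/-- The gradient of `F` on the positive orthant:
`∇F(q)ₙ = ½ log qₙ` if `L = 2` and `∇F(q)ₙ = qₙ^{(2−L)/L}/(2−L)` if `L > 2`. -/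
def bregGradF {N : ℕ} (L : ℕ) (q : Fin N → ℝ) : Fin N → ℝ :=
  fun n => if L = 2 then (1 / 2) * Real.log (q n)
  else q n ^ (((2 : ℝ) - (L : ℝ)) / (L : ℝ)) / (2 - (L : ℝ))

/-- The Bregman divergence `D_F(p,q) = F(p) − F(q) − ⟨∇F(q), p − q⟩`. -/
def bregD {N : ℕ} (L : ℕ) (p q : Fin N → ℝ) : ℝ :=
  bregF L p - bregF L q - ∑ n, bregGradF L q n * (p n - q n)

/-- matrix summation identity -/
lemma aux_mat {M N : ℕ} (A : Matrix (Fin M) (Fin N) ℝ) (w : Fin M → ℝ) (u v : Fin N → ℝ) :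
    -(∑ j, w j * (A.mulVec u j - A.mulVec v j)) = ∑ n, Aᵀ.mulVec w n * (v n - u n) := by
  simp only [Matrix.mulVec, dotProduct, Matrix.transpose_apply, Finset.sum_mul, Finset.mul_sum,
    mul_sub, sub_mul, Finset.sum_sub_distrib]
  rw [Finset.sum_comm (γ := Fin M), Finset.sum_comm (γ := Fin M), neg_sub]
  congr 1 <;> exact Finset.sum_congr rfl fun i _ => Finset.sum_congr rfl fun j _ => by ring

/-- scalar algebra for the L > 2 case -/
lemma aux_scalar_gt (Lr g z q P1 P2 Y : ℝ) (hL0 : Lr ≠ 0) (h2L : (2:ℝ) - Lr ≠ 0)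
    (hA : P2 * (Y * Y) = 1) :
    g * (z - q) =
      -(Lr / (2 * (2 - Lr)) * ((Lr * Y * (-(g * Y))) * (2/Lr) * P1))
      - ( ((Lr * Y * (-(g * Y))) * (2/Lr - 1) * P2)/(2-Lr) * (z - q)
          + P1/(2-Lr) * (0 - (Lr * Y * (-(g * Y)))) ) := by
  field_simp
  linear_combination (g*(z-q)*(Lr-2)) * hA

/-- scalar algebra for the L = 2 case -/
lemma aux_scalar_two (g z X lq : ℝ) (hX : X ≠ 0) :
    g * (z - X ^ 2) =
      -((1/2 : ℝ) * ((2 * X ^ 1 * (-(g * X ^ 1))) * lq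
          + X ^ 2 * ((2 * X ^ 1 * (-(g * X ^ 1))) / X ^ 2)
          - (2 * X ^ 1 * (-(g * X ^ 1)))))
      - ( (1/2 : ℝ) * ((2 * X ^ 1 * (-(g * X ^ 1))) / X ^ 2) * (z - X ^ 2)
          + (1/2 : ℝ) * lq * (0 - (2 * X ^ 1 * (-(g * X ^ 1)))) ) := by
  field_simp
  ring

theorem stmt13 {M N : ℕ} (L : ℕ) (hL : 2 ≤ L)
    (A : Matrix (Fin M) (Fin N) ℝ) (y : Fin M → ℝ)
    (x : ℝ → Fin N → ℝ)
    (hflow : GradFlow A y L x)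
    (hpos : ∀ t : ℝ, 0 ≤ t → ∀ i, 0 < x t i)
    (z : Fin N → ℝ) (hz : ∀ i, 0 ≤ z i)
    (t : ℝ) (ht : 0 ≤ t) :
    HasDerivAt (fun s => bregD L z (fun i => x s i ^ L))
      (-(∑ j, (A.mulVec (fun i => x t i ^ L) j - y j) *
          (A.mulVec (fun i => x t i ^ L) j - A.mulVec z j))) t := by
  have hXpos : ∀ n, 0 < x t n := hpos t ht
  set g : Fin N → ℝ := Matrix.mulVec Aᵀ (A.mulVec (fun j => x t j ^ L) - y) with hg
  have hq : ∀ n : Fin N, HasDerivAt (fun s => x s n ^ L)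
      ((L:ℝ) * x t n ^ (L-1) * (-(g n * x t n ^ (L-1)))) t := fun n => (hflow t ht n).pow L
  have hqpos : ∀ n, (0:ℝ) < x t n ^ L := fun n => pow_pos (hXpos n) L
  have hqne : ∀ n, (x t n ^ L : ℝ) ≠ 0 := fun n => (hqpos n).ne'
  -- rewrite target value
  have hmat : -(∑ j, (A.mulVec (fun i => x t i ^ L) j - y j) *
        (A.mulVec (fun i => x t i ^ L) j - A.mulVec z j))
      = ∑ n, g n * (z n - x t n ^ L) := by
    have := aux_mat A (fun j => A.mulVec (fun i => x t i ^ L) j - y j)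
      (fun i => x t i ^ L) z
    simpa [hg, Pi.sub_def] using this
  rw [hmat]
  rcases eq_or_lt_of_le hL with hL2 | hL2
  · -- L = 2
    subst hL2
    have hfe : (fun s => bregD 2 z (fun i => x s i ^ 2)) =
        fun s => ((1/2 : ℝ) * ∑ n, (z n * Real.log (z n) - z n))
          - (1/2 : ℝ) * (∑ n, (x s n ^ 2 * Real.log (x s n ^ 2) - x s n ^ 2))
          - ∑ n, ((1/2 : ℝ) * Real.log (x s n ^ 2) * (z n - x s n ^ 2)) := by
      funext s
      simp [bregD, bregF, bregGradF, mul_assoc, Finset.mul_sum]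
    rw [hfe]
    have h1 : HasDerivAt (fun s => ∑ n, (x s n ^ 2 * Real.log (x s n ^ 2) - x s n ^ 2))
        (∑ n, (((2:ℝ) * x t n ^ (2-1) * (-(g n * x t n ^ (2-1)))) * Real.log (x t n ^ 2)
            + x t n ^ 2 * (((2:ℝ) * x t n ^ (2-1) * (-(g n * x t n ^ (2-1)))) / x t n ^ 2)
            - ((2:ℝ) * x t n ^ (2-1) * (-(g n * x t n ^ (2-1)))))) t :=
      HasDerivAt.fun_sum fun n _ => ((hq n).mul ((hq n).log (hqne n))).sub (hq n)
    have h2 : HasDerivAt (fun s => ∑ n, ((1/2 : ℝ) * Real.log (x s n ^ 2) * (z n - x s n ^ 2)))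
        (∑ n, ((1/2 : ℝ) * (((2:ℝ) * x t n ^ (2-1) * (-(g n * x t n ^ (2-1)))) / x t n ^ 2)
              * (z n - x t n ^ 2)
            + (1/2 : ℝ) * Real.log (x t n ^ 2)
              * (0 - ((2:ℝ) * x t n ^ (2-1) * (-(g n * x t n ^ (2-1))))))) t :=
      HasDerivAt.fun_sum fun n _ =>
        (((hq n).log (hqne n)).const_mul (1/2 : ℝ)).mul ((hasDerivAt_const t (z n)).sub (hq n))
    have key := ((hasDerivAt_const t ((1/2 : ℝ) * ∑ n, (z n * Real.log (z n) - z n))).sub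
      (h1.const_mul (1/2 : ℝ))).sub h2
    refine key.congr_deriv (Eq.symm ?_)
    rw [zero_sub, Finset.mul_sum, ← Finset.sum_neg_distrib, ← Finset.sum_sub_distrib]
    refine Finset.sum_congr rfl fun n _ => ?_
    have := aux_scalar_two (g n) (z n) (x t n) (Real.log (x t n ^ 2)) (hXpos n).ne'
    convert this using 2 <;> norm_num
  · -- L > 2
    have hne2 : L ≠ 2 := by omega
    have hL0 : (L:ℝ) ≠ 0 := by positivity
    have h2L : (2:ℝ) - (L:ℝ) ≠ 0 := by
      have : (2:ℝ) < L := by exact_mod_cast hL2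
      linarith
    have hfe : (fun s => bregD L z (fun i => x s i ^ L)) =
        fun s => (((L:ℝ) / (2 * (2 - (L:ℝ)))) * ∑ n, z n ^ ((2:ℝ)/(L:ℝ)))
          - ((L:ℝ) / (2 * (2 - (L:ℝ)))) * (∑ n, (x s n ^ L : ℝ) ^ ((2:ℝ)/(L:ℝ)))
          - ∑ n, ((x s n ^ L : ℝ) ^ (((2:ℝ) - (L:ℝ))/(L:ℝ)) / (2 - (L:ℝ)) * (z n - x s n ^ L)) := by
      funext s
      simp [bregD, bregF, bregGradF, hne2]
    rw [hfe]
    have h1 : HasDerivAt (fun s => ∑ n, (x s n ^ L : ℝ) ^ ((2:ℝ)/(L:ℝ)))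
        (∑ n, (((L:ℝ) * x t n ^ (L-1) * (-(g n * x t n ^ (L-1))))
            * ((2:ℝ)/(L:ℝ)) * (x t n ^ L : ℝ) ^ ((2:ℝ)/(L:ℝ) - 1))) t :=
      HasDerivAt.fun_sum fun n _ => (hq n).rpow_const (Or.inl (hqne n))
    have h2 : HasDerivAt
        (fun s => ∑ n, ((x s n ^ L : ℝ) ^ (((2:ℝ) - (L:ℝ))/(L:ℝ)) / (2 - (L:ℝ))
            * (z n - x s n ^ L)))
        (∑ n, ((((L:ℝ) * x t n ^ (L-1) * (-(g n * x t n ^ (L-1))))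
              * (((2:ℝ) - (L:ℝ))/(L:ℝ)) * (x t n ^ L : ℝ) ^ (((2:ℝ) - (L:ℝ))/(L:ℝ) - 1)) / (2 - (L:ℝ))
              * (z n - x t n ^ L)
            + (x t n ^ L : ℝ) ^ (((2:ℝ) - (L:ℝ))/(L:ℝ)) / (2 - (L:ℝ))
              * (0 - ((L:ℝ) * x t n ^ (L-1) * (-(g n * x t n ^ (L-1))))))) t :=
      HasDerivAt.fun_sum fun n _ =>
        (((hq n).rpow_const (Or.inl (hqne n))).div_const (2 - (L:ℝ))).mul
          ((hasDerivAt_const t (z n)).sub (hq n))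
    have key := ((hasDerivAt_const t (((L:ℝ) / (2 * (2 - (L:ℝ)))) * ∑ n, z n ^ ((2:ℝ)/(L:ℝ)))).sub
      (h1.const_mul ((L:ℝ) / (2 * (2 - (L:ℝ)))))).sub h2
    refine key.congr_deriv (Eq.symm ?_)
    rw [zero_sub, Finset.mul_sum, ← Finset.sum_neg_distrib, ← Finset.sum_sub_distrib]
    refine Finset.sum_congr rfl fun n _ => ?_
    -- exponent normalization
    have hexp : ((2:ℝ) - (L:ℝ))/(L:ℝ) = (2:ℝ)/(L:ℝ) - 1 := by field_simp
    have hA : (x t n ^ L : ℝ) ^ ((2:ℝ)/(L:ℝ) - 1 - 1) * (x t n ^ (L-1) * x t n ^ (L-1)) = 1 := by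
      have hX := hXpos n
      have hc1 : ((L - 1 : ℕ) : ℝ) = (L:ℝ) - 1 := by
        push_cast [Nat.cast_sub (by omega : 1 ≤ L)]; ring
      rw [← Real.rpow_natCast (x t n) L, ← Real.rpow_natCast (x t n) (L-1),
        ← Real.rpow_mul hX.le, ← Real.rpow_add hX, ← Real.rpow_add hX, hc1]
      rw [show (L:ℝ) * ((2:ℝ)/(L:ℝ) - 1 - 1) + ((L:ℝ) - 1 + ((L:ℝ) - 1)) = 0 by field_simp; ring]
      exact Real.rpow_zero _
    rw [hexp]
    exact aux_scalar_gt (L:ℝ) (g n) (z n) (x t n ^ L) ((x t n ^ L : ℝ) ^ ((2:ℝ)/(L:ℝ) - 1))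
      ((x t n ^ L : ℝ) ^ ((2:ℝ)/(L:ℝ) - 1 - 1)) (x t n ^ (L-1)) hL0 h2L hA
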